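/- Let R be a ring, (bnd, unb) the torsion theory cogenerated by R, and τ_L the Lambek torsion theory (cogenerated by E(R)). Then (bnd, unb) = τ_L if and only if (bnd, unb) is hereditary. -/

import Mathlib

/-- A class of left `R`-modules (in universe 0). -/
def ModuleClass (R : Type) [Ring R] : Type 1 :=
  ∀ (M : Type) [AddCommGroup M] [Module R M], Prop

/-- All `R`-linear maps from `M` to `N` vanish. -/
def HomZero (R : Type) [Ring R] (M N : Type) [AddCommGroup M] [Module R M]
    [AddCommGroup N] [Module R N] : Prop :=
  ∀ f : M →ₗ[R] N, f = 0

/-- `(T, F)` is a torsion theory for `R`: `Hom_R(T,F) = 0` for all `T ∈ T`, `F ∈ F`,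
and `T` and `F` are maximal classes with this property. -/
def IsTorsionTheory (R : Type) [Ring R] (T F : ModuleClass R) : Prop :=
  (∀ (M : Type) [AddCommGroup M] [Module R M] (N : Type) [AddCommGroup N] [Module R N],
      T M → F N → HomZero R M N) ∧
  (∀ (M : Type) [AddCommGroup M] [Module R M],
      (∀ (N : Type) [AddCommGroup N] [Module R N], F N → HomZero R M N) → T M) ∧
  (∀ (N : Type) [AddCommGroup N] [Module R N],
      (∀ (M : Type) [AddCommGroup M] [Module R M], T M → HomZero R M N) → F N)

/-- `i : M →ₗ[R] E` exhibits `E` as an injective envelope of `M`: `E` is an injective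
module and `M` embeds in `E` as an essential submodule. -/
def IsInjectiveEnvelope (R : Type) [Ring R] (M E : Type) [AddCommGroup M] [Module R M]
    [AddCommGroup E] [Module R E] (i : M →ₗ[R] E) : Prop :=
  Function.Injective i ∧ Module.Injective R E ∧
    ∀ N : Submodule R E, N ≠ ⊥ → N ⊓ LinearMap.range i ≠ ⊥

/-- The torsion theory `(T,F)` is cogenerated by the module `C`: it is the largest torsion
theory in which `C` is torsion-free. -/
def IsCogeneratedBy (R : Type) [Ring R] (T F : ModuleClass R) (C : Type) [AddCommGroup C]
    [Module R C] : Prop :=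
  IsTorsionTheory R T F ∧ F C ∧
    ∀ (T' F' : ModuleClass R), IsTorsionTheory R T' F' → F' C →
      ∀ (M : Type) [AddCommGroup M] [Module R M], T' M → T M

/-- the class of modules with no nonzero homs to `C` -/
def cogF (R : Type) [Ring R] (C : Type) [AddCommGroup C] [Module R C] : ModuleClass R :=
  fun N iN mN => ∀ (M : Type) (iM : AddCommGroup M) (mM : Module R M),
    @HomZero R _ M C iM mM _ _ → @HomZero R _ M N iM mM iN mN

def cogT' (R : Type) [Ring R] (C : Type) [AddCommGroup C] [Module R C] : ModuleClass R :=
  fun M iM mM => ∀ (N : Type) (iN : AddCommGroup N) (mN : Module R N),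
    @cogF R _ C _ _ N iN mN → @HomZero R _ M N iM mM iN mN

theorem cogT'_tt (R : Type) [Ring R] (C : Type) [AddCommGroup C] [Module R C] :
    IsTorsionTheory R (cogT' R C) (cogF R C) := by
  refine ⟨?_, ?_, ?_⟩
  · intro M _ _ N _ _ hM hN
    exact hM N _ _ hN
  · intro M _ _ h N iN mN hN
    exact h N hN
  · intro N _ _ h M iM mM hM
    refine h M (fun N' iN' mN' hN' => hN' M _ _ hM)

theorem cog_torsion_iff (R : Type) [Ring R] (T F : ModuleClass R) (C : Type)
    [AddCommGroup C] [Module R C] (h : IsCogeneratedBy R T F C)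
    (M : Type) [AddCommGroup M] [Module R M] : T M ↔ HomZero R M C := by
  constructor
  · intro hM
    exact h.1.1 M C hM h.2.1
  · intro hM
    refine h.2.2 (cogT' R C) (cogF R C) (cogT'_tt R C)
      (fun M' iM' mM' h' => h') M ?_
    intro N iN mN hN
    exact hN M _ _ hM

theorem cog_free_iff (R : Type) [Ring R] (T F : ModuleClass R) (C : Type)
    [AddCommGroup C] [Module R C] (h : IsCogeneratedBy R T F C)
    (N : Type) [AddCommGroup N] [Module R N] :
    F N ↔ ∀ (M : Type) [AddCommGroup M] [Module R M], T M → HomZero R M N := by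
  constructor
  · intro hN M _ _ hM
    exact h.1.1 M N hM hN
  · intro hh
    exact h.1.2.2 N hh


/-- let `(bnd, unb)` be the torsion theory cogenerated by `R` and `τ_L` the
Lambek torsion theory (cogenerated by the injective envelope `E(R)`). Then
`(bnd, unb) = τ_L` if and only if `(bnd, unb)` is hereditary. -/
theorem bnd_eq_lambek_iff_hereditary (R : Type) [Ring R] (bT bF lT lF : ModuleClass R)
    (hb : IsCogeneratedBy R bT bF R)
    (E : Type) [AddCommGroup E] [Module R E] (i : R →ₗ[R] E)
    (hE : IsInjectiveEnvelope R R E i)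
    (hl : IsCogeneratedBy R lT lF E) :
    ((∀ (M : Type) [AddCommGroup M] [Module R M], bT M ↔ lT M) ∧
     (∀ (M : Type) [AddCommGroup M] [Module R M], bF M ↔ lF M)) ↔
      (∀ (M : Type) [AddCommGroup M] [Module R M] (N : Type) [AddCommGroup N] [Module R N]
        (f : N →ₗ[R] M), Function.Injective f → bT M → bT N) := by
  obtain ⟨iinj, Einj, iess⟩ := hE
  constructor
  · rintro ⟨hT, _⟩ M _ _ N _ _ f hf hM
    -- bT M → lT M → HomZero M E; extend homs N → E along f by injectivity of E
    have hME : HomZero R M E := (cog_torsion_iff R lT lF E hl M).mp ((hT M).mp hM)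
    have hNE : HomZero R N E := by
      intro g
      obtain ⟨h, hh⟩ := Einj.out f hf g
      ext x
      have := hh x
      rw [hME h] at this
      simpa using this.symm
    exact (hT N).mpr ((cog_torsion_iff R lT lF E hl N).mpr hNE)
  · intro her
    -- key: under hereditary hypothesis, HomZero M R ↔ HomZero M E
    have key : ∀ (M : Type) [AddCommGroup M] [Module R M], bT M ↔ lT M := by
      intro M _ _
      rw [cog_torsion_iff R bT bF R hb M, cog_torsion_iff R lT lF E hl M]
      constructor
      · intro hMR f
        by_contra hfne
        -- range f is a nonzero submodule of E, meets range i
        have hrange : LinearMap.range f ≠ ⊥ := by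
          intro h0
          exact hfne (LinearMap.range_eq_bot.mp h0)
        have hmeet := iess (LinearMap.range f) hrange
        obtain ⟨x, ⟨hx, hxi⟩, hx0⟩ := Submodule.exists_mem_ne_zero_of_ne_bot hmeet
        obtain ⟨m, hm⟩ := hx
        -- N = preimage of range i under f
        set N : Submodule R M := Submodule.comap f (LinearMap.range i) with hN
        have hNb : bT N := her M N N.subtype (Submodule.injective_subtype N)
          ((cog_torsion_iff R bT bF R hb M).mpr hMR)
        have hNR : HomZero R N R := (cog_torsion_iff R bT bF R hb N).mp hNb
        -- build g : N →ₗ[R] R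
        let e : R ≃ₗ[R] LinearMap.range i := LinearEquiv.ofInjective i iinj
        let f' : N →ₗ[R] LinearMap.range i :=
          LinearMap.codRestrict (LinearMap.range i) (f ∘ₗ N.subtype) (fun n => n.2)
        have hg : e.symm.toLinearMap ∘ₗ f' = 0 := hNR _
        have hf'0 : f' = 0 := by
          ext n
          have : e.symm (f' n) = 0 := by
            have := LinearMap.congr_fun hg n
            simpa using this
          have := congrArg e this
          simpa using this
        -- but m ∈ N and f m = x ≠ 0
        have hmN : m ∈ N := by simpa [hN, Submodule.mem_comap, hm] using hxi
        have : f' ⟨m, hmN⟩ = 0 := by rw [hf'0]; rfl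
        have : f m = 0 := by
          have := congrArg (Submodule.subtype _) this
          exact (show f m = ((f' ⟨m, hmN⟩ : LinearMap.range i) : E) from rfl).trans this
        exact hx0 (by rw [← hm, this])
      · intro hME f
        have : i ∘ₗ f = 0 := hME _
        ext x
        have : i (f x) = 0 := by
          have := LinearMap.congr_fun this x
          simpa using this
        simpa using iinj (by simpa using this : i (f x) = i 0)
    refine ⟨key, ?_⟩
    intro N _ _
    rw [cog_free_iff R bT bF R hb N, cog_free_iff R lT lF E hl N]
    constructor
    · intro h M _ _ hM
      exact h M ((key M).mpr hM)
    · intro h M _ _ hM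
      exact h M ((key M).mp hM)
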